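/- arXiv:1107.1417 — 2 statements merged into one kernel-verified Lean document; each statement's English description precedes it below -/
import Mathlib

section
/- Let 0<q<1, let k,l be coprime positive integers and let s ∈ {1,…,l}. For every integer m ≥ 1 and every n ∈ ℕ, the family of diagonal matrix coefficients p ↦ ⟨e_p, A_s^m B_s^n e_p⟩ is absolutely summable, with sum equal to q^{2ms}/(1-q^{2ml}) if n = 0 and equal to 0 if n ≥ 1; likewise for every n' ≥ 1 the sum of p ↦ ⟨e_p, A_s^m (B_s*)^{n'} e_p⟩ equals 0. (These are the values τ_s(a^m b^n) of the Chern character of the 1-summable Fredholm module associated to π_s.) -/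
noncomputable section

/-- The Hilbert space `ℓ²(ℕ)` of square-summable complex sequences. -/
abbrev ℓ2 : Type := lp (fun _ : ℕ => ℂ) 2

/-- The standard orthonormal basis vectors of `ℓ²(ℕ)`. -/
def e (p : ℕ) : ℓ2 := lp.single 2 p 1

lemma inner_e_left (p : ℕ) (f : ℓ2) : (inner ℂ (e p) f : ℂ) = f p := by
  simp [e, lp.inner_single_left]

lemma e_apply (p j : ℕ) : (e p : ∀ _ : ℕ, ℂ) j = if j = p then 1 else 0 := by
  simp [e, lp.single_apply, Pi.single_apply]

lemma inner_e_e (p r : ℕ) : (inner ℂ (e p) (e r) : ℂ) = if p = r then 1 else 0 := by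
  rw [inner_e_left, e_apply]

/-- For `m ≥ 1`, the diagonal matrix coefficients
`p ↦ ⟨e_p, A_s^m B_s^n e_p⟩` are absolutely summable, with sum `q^{2ms}/(1-q^{2ml})`
if `n = 0` and sum `0` if `n ≥ 1`; likewise `p ↦ ⟨e_p, A_s^m (B_s*)^{n'} e_p⟩` sums to
`0` for `n' ≥ 1`.  (Values `τ_s(a^m b^n)` of the Chern character of the associated
1-summable Fredholm module.) -/
theorem chern_character_values
    (q : ℝ) (hq0 : 0 < q) (hq1 : q < 1)
    (k l : ℕ) (hk : 0 < k) (hl : 0 < l) (hkl : Nat.Coprime k l)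
    (s : ℕ) (hs1 : 1 ≤ s) (hsl : s ≤ l)
    (A B : ℓ2 →L[ℂ] ℓ2)
    (hA : ∀ p : ℕ, A (e p) = ((q : ℂ) ^ (2 * (l * p + s))) • e p)
    (hB0 : B (e 0) = 0)
    (hB : ∀ p : ℕ, B (e (p + 1)) =
      (((q : ℂ) ^ (k * (l * (p + 1) + s))) *
        ((∏ r ∈ Finset.range l,
          Real.sqrt (1 - q ^ (2 * (l * (p + 1) + s) - 2 * (r + 1))) : ℝ) : ℂ)) • e p)
    (m : ℕ) (hm : 1 ≤ m) :
    (∀ n : ℕ,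
      Summable (fun p : ℕ => ‖(@inner ℂ _ _ (e p) ((A ^ m * B ^ n) (e p)))‖) ∧
      HasSum (fun p : ℕ => (@inner ℂ _ _ (e p) ((A ^ m * B ^ n) (e p))))
        (if n = 0 then (q : ℂ) ^ (2 * m * s) / (1 - (q : ℂ) ^ (2 * m * l)) else 0)) ∧
    (∀ n' : ℕ,
      Summable (fun p : ℕ =>
        ‖(@inner ℂ _ _ (e p) ((A ^ m * (star B) ^ (n' + 1)) (e p)))‖) ∧
      HasSum (fun p : ℕ =>
        (@inner ℂ _ _ (e p) ((A ^ m * (star B) ^ (n' + 1)) (e p)))) 0) := by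
  -- action of powers of A on basis vectors
  have hAm : ∀ (j p : ℕ), (A ^ j) (e p) = ((q : ℂ) ^ (2 * (l * p + s) * j)) • e p := by
    intro j
    induction j with
    | zero => intro p; simp
    | succ j ih =>
        intro p
        rw [pow_succ, ContinuousLinearMap.mul_apply, hA p, map_smul, ih p,
          smul_smul, ← pow_add]
        congr 2
        ring
  -- powers of B lower the index
  have hBn : ∀ (j p : ℕ), ∃ d : ℂ,
      (B ^ (j + 1)) (e p) = d • e (p - (j + 1)) ∧ (p = 0 → d = 0) := by
    intro j
    induction j with
    | zero =>
        intro p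
        cases p with
        | zero => exact ⟨0, by simp [pow_one, hB0], fun _ => rfl⟩
        | succ r => exact ⟨_, by simpa using hB r, fun h => by omega⟩
    | succ j ih =>
        intro p
        cases p with
        | zero =>
            refine ⟨0, ?_, fun _ => rfl⟩
            rw [pow_succ, ContinuousLinearMap.mul_apply, hB0]
            simp
        | succ r =>
            obtain ⟨d, hd, _⟩ := ih r
            refine ⟨(((q : ℂ) ^ (k * (l * (r + 1) + s))) *
              ((∏ r' ∈ Finset.range l,
                Real.sqrt (1 - q ^ (2 * (l * (r + 1) + s) - 2 * (r' + 1))) : ℝ) : ℂ)) * d,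
              ?_, fun h => by omega⟩
            rw [pow_succ, ContinuousLinearMap.mul_apply, hB r, map_smul, hd,
              smul_smul]
            congr 2
            omega
  -- star B raises the index
  have hstar : ∀ p : ℕ, ∃ d : ℂ, (star B) (e p) = d • e (p + 1) := by
    intro p
    refine ⟨starRingEnd ℂ (((q : ℂ) ^ (k * (l * (p + 1) + s))) *
        ((∏ r ∈ Finset.range l,
          Real.sqrt (1 - q ^ (2 * (l * (p + 1) + s) - 2 * (r + 1))) : ℝ) : ℂ)), ?_⟩
    apply lp.ext
    funext j
    have hcoord : ∀ (f : ℓ2), (f : ∀ _ : ℕ, ℂ) j = (inner ℂ (e j) f : ℂ) :=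
      fun f => (inner_e_left j f).symm
    rw [hcoord, hcoord, ContinuousLinearMap.star_eq_adjoint,
      ContinuousLinearMap.adjoint_inner_right]
    rw [inner_smul_right, inner_e_e]
    cases j with
    | zero => rw [hB0]; simp
    | succ r =>
        rw [hB r, inner_smul_left, inner_e_e]
        by_cases h : r = p
        · subst h; simp
        · simp [h, fun hh : r + 1 = p + 1 => h (by omega)]
  -- powers of star B raise the index
  have hstarn : ∀ (j p : ℕ), ∃ d : ℂ,
      ((star B) ^ (j + 1)) (e p) = d • e (p + (j + 1)) := by
    intro j
    induction j with
    | zero => intro p; simpa using hstar p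
    | succ j ih =>
        intro p
        obtain ⟨d, hd⟩ := hstar p
        obtain ⟨d', hd'⟩ := ih (p + 1)
        refine ⟨d * d', ?_⟩
        rw [pow_succ, ContinuousLinearMap.mul_apply, hd, map_smul, hd', smul_smul]
        congr 2
        omega
  constructor
  · intro n
    cases n with
    | zero =>
        simp only [pow_zero, mul_one, if_pos rfl]
        have hterm : ∀ p : ℕ,
            (@inner ℂ _ _ (e p) ((A ^ m) (e p))) = (q : ℂ) ^ (2 * (l * p + s) * m) := by
          intro p
          rw [hAm m p, inner_smul_right, inner_e_e, if_pos rfl, mul_one]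
        have hr : ‖(q : ℂ) ^ (2 * m * l)‖ < 1 := by
          rw [norm_pow, Complex.norm_real, Real.norm_eq_abs, abs_of_pos hq0]
          exact pow_lt_one₀ hq0.le hq1 (by positivity)
        have hgeom := (hasSum_geometric_of_norm_lt_one hr).mul_left ((q : ℂ) ^ (2 * m * s))
        have hsum : HasSum (fun p : ℕ => (@inner ℂ _ _ (e p) ((A ^ m) (e p))))
            ((q : ℂ) ^ (2 * m * s) / (1 - (q : ℂ) ^ (2 * m * l))) := by
          rw [div_eq_mul_inv]
          refine HasSum.congr_fun hgeom ?_
          intro p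
          rw [hterm p, ← pow_mul, ← pow_add]
          congr 1
          ring
        have hsummR : Summable (fun p : ℕ => q ^ (2 * m * s) * (q ^ (2 * m * l)) ^ p) :=
          (summable_geometric_of_lt_one (by positivity)
            (pow_lt_one₀ hq0.le hq1 (by positivity))).mul_left _
        refine ⟨hsummR.congr fun p => ?_, hsum⟩
        rw [hterm p, norm_pow, Complex.norm_real, Real.norm_eq_abs, abs_of_pos hq0,
          ← pow_mul, ← pow_add]
        congr 1
        ring
    | succ n =>
        have hterm : ∀ p : ℕ,
            (@inner ℂ _ _ (e p) ((A ^ m * B ^ (n + 1)) (e p))) = 0 := by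
          intro p
          obtain ⟨d, hd, hd0⟩ := hBn n p
          rw [ContinuousLinearMap.mul_apply, hd, map_smul, hAm, smul_smul,
            inner_smul_right, inner_e_e]
          cases p with
          | zero => rw [hd0 rfl]; simp
          | succ r => rw [if_neg (by omega)]; simp
        constructor
        · apply Summable.congr ((summable_zero : Summable (fun _ : ℕ => (0:ℝ))))
          intro p
          rw [hterm p, norm_zero]
        · rw [if_neg (by omega)]
          exact HasSum.congr_fun hasSum_zero (fun p => hterm p)
  · intro n'
    have hterm : ∀ p : ℕ,
        (@inner ℂ _ _ (e p) ((A ^ m * (star B) ^ (n' + 1)) (e p))) = 0 := by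
      intro p
      obtain ⟨d, hd⟩ := hstarn n' p
      rw [ContinuousLinearMap.mul_apply, hd, map_smul, hAm, smul_smul,
        inner_smul_right, inner_e_e, if_neg (by omega)]
      simp
    constructor
    · apply Summable.congr ((summable_zero : Summable (fun _ : ℕ => (0:ℝ))))
      intro p
      rw [hterm p, norm_zero]
    · exact HasSum.congr_fun hasSum_zero (fun p => hterm p)
end
end

section
/- Let 0<q<1, let l be a positive integer and let s ∈ {1,…,l}. Then ∑_{m=1}^{l} (-1)^m q^{m(m-1)} (1 - q^{-2ml}) binom(l,m)_{q^2} · q^{2ms}/(1 - q^{2ml}) = 1. (This is the pairing τ_s(Tr E[1]) = 1 of the cyclic cocycle τ_s with the zero-component of the Chern character of the line bundle L[1]; since it is nonzero, the module L[1] over O(WP_q(1,l)) is not free.) -/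
/-- The Gaussian (q-deformed) binomial coefficient
`binom(l,m)_x = ∏_{i=1}^{m} (1 - x^{l-m+i})/(1 - x^i)`. -/
noncomputable def qbinom (x : ℝ) (l m : ℕ) : ℝ :=
  ∏ i ∈ Finset.range m, (1 - x ^ (l - m + i + 1)) / (1 - x ^ (i + 1))

noncomputable def qfact (x : ℝ) (n : ℕ) : ℝ :=
  ∏ i ∈ Finset.range n, (1 - x ^ (i + 1))

lemma one_sub_pow_pos {x : ℝ} (hx0 : 0 < x) (hx1 : x < 1) (n : ℕ) :
    0 < 1 - x ^ (n + 1) := by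
  have : x ^ (n+1) < 1 := pow_lt_one₀ hx0.le hx1 (Nat.succ_ne_zero n)
  linarith

lemma qfact_pos {x : ℝ} (hx0 : 0 < x) (hx1 : x < 1) (n : ℕ) : 0 < qfact x n :=
  Finset.prod_pos fun i _ => one_sub_pow_pos hx0 hx1 i

lemma qfact_succ (x : ℝ) (n : ℕ) : qfact x (n+1) = qfact x n * (1 - x ^ (n+1)) :=
  Finset.prod_range_succ _ _

lemma qbinom_eq_div {x : ℝ} (hx0 : 0 < x) (hx1 : x < 1) (m k : ℕ) :
    qbinom x (m + k) m = qfact x (m + k) / (qfact x m * qfact x k) := by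
  have hfm := (qfact_pos hx0 hx1 m).ne'
  have hfk := (qfact_pos hx0 hx1 k).ne'
  have h : qfact x (m + k) = qfact x k * ∏ i ∈ Finset.range m, (1 - x ^ (k + i + 1)) := by
    rw [show m + k = k + m by ring]
    unfold qfact
    rw [Finset.prod_range_add]
  unfold qbinom
  simp only [Nat.add_sub_cancel_left]  -- m + k - m = k ?
  rw [Finset.prod_div_distrib, h]
  show _ / qfact x m = _
  field_simp

lemma qbinom_pascal {x : ℝ} (hx0 : 0 < x) (hx1 : x < 1) (m k : ℕ) :
    qbinom x (m + k + 2) (m + 1)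
      = qbinom x (m + k + 1) (m + 1) + x ^ (k + 1) * qbinom x (m + k + 1) m := by
  have h1 : qbinom x (m + k + 2) (m + 1)
      = qfact x (m + k + 2) / (qfact x (m+1) * qfact x (k+1)) := by
    rw [show m + k + 2 = (m+1) + (k+1) by ring, qbinom_eq_div hx0 hx1]
  have h2 : qbinom x (m + k + 1) (m + 1)
      = qfact x (m + k + 1) / (qfact x (m+1) * qfact x k) := by
    rw [show m + k + 1 = (m+1) + k by ring, qbinom_eq_div hx0 hx1]
  have h3 : qbinom x (m + k + 1) m
      = qfact x (m + k + 1) / (qfact x m * qfact x (k+1)) := by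
    rw [show m + k + 1 = m + (k+1) by ring, qbinom_eq_div hx0 hx1]
  rw [h1, h2, h3, qfact_succ x (m+k+1), qfact_succ x m, qfact_succ x k]
  have hfm := (qfact_pos hx0 hx1 m).ne'
  have hfk := (qfact_pos hx0 hx1 k).ne'
  have hsm := (one_sub_pow_pos hx0 hx1 m).ne'
  have hsk := (one_sub_pow_pos hx0 hx1 k).ne'
  field_simp
  ring

lemma qbinom_zero (x : ℝ) (l : ℕ) : qbinom x l 0 = 1 := by simp [qbinom]

lemma qbinom_self {x : ℝ} (hx0 : 0 < x) (hx1 : x < 1) (l : ℕ) : qbinom x l l = 1 := by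
  unfold qbinom
  apply Finset.prod_eq_one
  intro i _
  rw [Nat.sub_self, Nat.zero_add]
  exact div_self (one_sub_pow_pos hx0 hx1 i).ne'

noncomputable def cE (x : ℝ) (l m : ℕ) : ℝ :=
  if m ≤ l then x ^ (m.choose 2) * qbinom x l m else 0

lemma cE_zero (x : ℝ) (l : ℕ) : cE x l 0 = 1 := by
  simp [cE, qbinom_zero]

lemma choose_two_succ (m : ℕ) : (m+1).choose 2 = m.choose 2 + m := by
  rw [Nat.choose_succ_succ]
  simp [Nat.choose_one_right, Nat.add_comm]

lemma cE_succ {x : ℝ} (hx0 : 0 < x) (hx1 : x < 1) (l m : ℕ) :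
    cE x (l+1) (m+1) = cE x l (m+1) + x ^ l * cE x l m := by
  rcases lt_trichotomy (m+1) (l+1) with h | h | h
  · -- m + 1 ≤ l
    have hm1l : m + 1 ≤ l := by omega
    obtain ⟨k, hk⟩ : ∃ k, l = m + 1 + k := ⟨l - (m+1), by omega⟩
    subst hk
    unfold cE
    rw [if_pos (by omega), if_pos (by omega), if_pos (by omega)]
    rw [show m + 1 + k + 1 = m + k + 2 by ring, show m + 1 + k = m + k + 1 by ring]
    rw [qbinom_pascal hx0 hx1 m k]
    have he : (m+1).choose 2 + (k + 1) = (m + k + 1) + m.choose 2 := by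
      rw [choose_two_succ]; omega
    have hxx : x ^ ((m+1).choose 2) * x ^ (k + 1) = x ^ (m + k + 1) * x ^ (m.choose 2) := by
      rw [← pow_add, ← pow_add, he]
    linear_combination qbinom x (m + k + 1) m * hxx
  · -- m = l
    have hm : m = l := by omega
    subst hm
    unfold cE
    rw [if_pos (le_refl _), if_neg (by omega), if_pos (le_refl _)]
    rw [qbinom_self hx0 hx1, qbinom_self hx0 hx1]
    rw [choose_two_succ]
    ring
  · unfold cE
    rw [if_neg (by omega), if_neg (by omega), if_neg (by omega)]
    ring

lemma qbinom_genfun {x : ℝ} (hx0 : 0 < x) (hx1 : x < 1) :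
    ∀ (l : ℕ) (t : ℝ), ∏ i ∈ Finset.range l, (1 + x ^ i * t)
      = ∑ m ∈ Finset.range (l+1), cE x l m * t ^ m := by
  intro l
  induction l with
  | zero => intro t; simp [cE_zero]
  | succ l ih =>
    intro t
    have hS :
        ∑ i ∈ Finset.range (l+1), cE x l (i+1) * t ^ (i+1)
          = (∑ m ∈ Finset.range (l+1), cE x l m * t ^ m) - 1 := by
      have h1 := Finset.sum_range_succ' (fun m => cE x l m * t ^ m) (l+1)
      have h2 := Finset.sum_range_succ (fun m => cE x l m * t ^ m) (l+1)
      have h3 : cE x l (l+1) = 0 := by simp [cE]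
      simp only [h3, cE_zero, zero_mul, add_zero, pow_zero, one_mul] at h1 h2
      linarith [h1, h2]
    rw [Finset.prod_range_succ, ih t]
    rw [Finset.sum_range_succ' (fun m => cE x (l+1) m * t ^ m) (l+1)]
    simp only [cE_succ hx0 hx1, cE_zero, pow_zero, one_mul, add_mul]
    rw [Finset.sum_add_distrib, hS]
    have h4 : ∑ i ∈ Finset.range (l+1), x ^ l * cE x l i * t ^ (i+1)
        = x ^ l * t * ∑ m ∈ Finset.range (l+1), cE x l m * t ^ m := by
      rw [Finset.mul_sum]
      apply Finset.sum_congr rfl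
      intro i _
      ring
    rw [h4]
    ring

/-- For `s ∈ {1, …, l}`,
`∑_{m=1}^{l} (-1)^m q^{m(m-1)} (1 - q^{-2ml}) binom(l,m)_{q^2} · q^{2ms}/(1 - q^{2ml}) = 1`
(the pairing `τ_s(Tr E[1]) = 1`; hence the module `L[1]` over `O(WP_q(1,l))` is not free). -/
theorem pairing_chern_character
    (q : ℝ) (hq0 : 0 < q) (hq1 : q < 1) (l : ℕ) (hl : 0 < l)
    (s : ℕ) (hs1 : 1 ≤ s) (hsl : s ≤ l) :
    ∑ m ∈ Finset.Icc 1 l,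
      (-1 : ℝ) ^ m * q ^ (m * (m - 1)) * (1 - (q ^ (2 * m * l))⁻¹) *
        qbinom (q ^ 2) l m * (q ^ (2 * m * s) / (1 - q ^ (2 * m * l))) = 1 := by
  set x : ℝ := q ^ 2 with hxdef
  have hx0 : 0 < x := by positivity
  have hx1 : x < 1 := by nlinarith
  set t : ℝ := -(x ^ (l - s))⁻¹ with htdef
  have hxls : (0:ℝ) < x ^ (l - s) := by positivity
  -- the product vanishes
  have hprod : ∏ i ∈ Finset.range l, (1 + x ^ i * t) = 0 := by
    apply Finset.prod_eq_zero (Finset.mem_range.mpr (show l - s < l by omega))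
    rw [htdef]
    field_simp
    norm_num
  have hsum := (qbinom_genfun hx0 hx1 l t).symm.trans hprod
  have hins : Finset.range (l+1) = insert 0 (Finset.Icc 1 l) := by
    ext a; simp; omega
  rw [hins, Finset.sum_insert (by simp)] at hsum
  simp only [cE_zero, pow_zero, one_mul] at hsum
  have hI : ∑ m ∈ Finset.Icc 1 l, cE x l m * t ^ m = -1 := by linarith
  have hterm : ∀ m ∈ Finset.Icc 1 l,
      (-1 : ℝ) ^ m * q ^ (m * (m - 1)) * (1 - (q ^ (2 * m * l))⁻¹) *
        qbinom (q ^ 2) l m * (q ^ (2 * m * s) / (1 - q ^ (2 * m * l)))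
      = -(cE x l m * t ^ m) := by
    intro m hm
    rw [Finset.mem_Icc] at hm
    obtain ⟨hm1, hml⟩ := hm
    have hc2 : 2 * m.choose 2 = m * (m - 1) := by
      rw [Nat.choose_two_right]
      apply Nat.mul_div_cancel'
      have h := Nat.even_mul_succ_self (m - 1)
      rw [show m - 1 + 1 = m by omega] at h
      have : m * (m - 1) = (m - 1) * m := by ring
      rw [this]
      exact h.two_dvd
    have hcE : cE x l m = q ^ (m * (m-1)) * qbinom (q^2) l m := by
      rw [cE, if_pos hml, hxdef, ← pow_mul, hc2]
    have htm : t ^ m = (-1 : ℝ) ^ m * (q ^ (2 * ((l - s) * m)))⁻¹ := by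
      have hxl : x ^ (l - s) = q ^ (2 * (l - s)) := by rw [hxdef, ← pow_mul]
      rw [htdef, hxl, neg_pow, inv_pow, ← pow_mul,
        show 2 * (l - s) * m = 2 * ((l - s) * m) by ring]
    have hsplit : q ^ (2 * m * l) = q ^ (2 * m * s) * q ^ (2 * ((l - s) * m)) := by
      rw [← pow_add]
      congr 1
      obtain ⟨d, rfl⟩ := Nat.exists_eq_add_of_le hsl
      rw [Nat.add_sub_cancel_left]
      ring
    rw [hcE, htm, hsplit]
    have hu : q ^ (2 * m * s) ≠ 0 := by positivity
    have hv : q ^ (2 * ((l - s) * m)) ≠ 0 := by positivity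
    have h1a : 1 - q ^ (2 * m * s) * q ^ (2 * ((l - s) * m)) ≠ 0 := by
      rw [← hsplit]
      have : q ^ (2 * m * l) < 1 :=
        pow_lt_one₀ hq0.le hq1 (by positivity)
      linarith
    field_simp
    ring
  rw [Finset.sum_congr rfl hterm, Finset.sum_neg_distrib, hI]
  norm_num
end
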